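/- Let m ≥ 1 and let D ⊆ ℂ^m × ℂ^m be a linear subspace such that Im⟨a, b⟩ ≥ 0 for every (a, b) ∈ D. Then there exists a linear map V : ℂ^m → ℂ^m with ‖Vx‖ ≤ ‖x‖ for all x ∈ ℂ^m such that D ⊆ { (a, b) ∈ ℂ^m × ℂ^m : (V − I)a + i(V + I)b = 0 }. Moreover, if dim D = m, then D = { (a, b) : (V − I)a + i(V + I)b = 0 }. -/

import Mathlib

open Complex Module

private lemma key_norm' {E : Type*} [NormedAddCommGroup E] [InnerProductSpace ℂ E]
    (a b : E) (h : 0 ≤ (inner ℂ b a).im) :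
    ‖a - Complex.I • b‖ ≤ ‖a + Complex.I • b‖ := by
  have h1 : ‖a + Complex.I • b‖ ^ 2 = ‖a‖^2 + 2 * (Complex.I * (inner ℂ a b)).re + ‖b‖^2 := by
    rw [@norm_add_sq ℂ]
    simp [norm_smul, inner_smul_right]
  have h2 : ‖a - Complex.I • b‖ ^ 2 = ‖a‖^2 - 2 * (Complex.I * (inner ℂ a b)).re + ‖b‖^2 := by
    rw [@norm_sub_sq ℂ]
    simp [norm_smul, inner_smul_right]
  have h3 : (inner ℂ a b).im = - (inner ℂ b a).im := by
    have := Complex.conj_im (inner ℂ b a)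
    rwa [inner_conj_symm] at this
  have h4 : (Complex.I * (inner ℂ a b)).re = -(inner ℂ a b).im := by simp
  nlinarith [norm_nonneg (a - Complex.I • b), norm_nonneg (a + Complex.I • b)]

set_option maxHeartbeats 1000000 in
/-- if `D ⊆ ℂ^m × ℂ^m` is a subspace with `Im⟨a, b⟩ ≥ 0` for every
`(a,b) ∈ D` (where `⟨a,b⟩ = Σ_k a_k·conj(b_k)`), then there is a linear contraction
`V` of `ℂ^m` with `D ⊆ {(a,b) : (V − I)a + i(V + I)b = 0}`, with equality when
`dim D = m`. -/
theorem stmt10 (m : ℕ) (hm : 1 ≤ m)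
    (D : Submodule ℂ (EuclideanSpace ℂ (Fin m) × EuclideanSpace ℂ (Fin m)))
    (hdiss : ∀ p ∈ D, 0 ≤ (∑ k, p.1 k * (starRingEnd ℂ) (p.2 k)).im) :
    ∃ V : EuclideanSpace ℂ (Fin m) →ₗ[ℂ] EuclideanSpace ℂ (Fin m),
      (∀ x, ‖V x‖ ≤ ‖x‖) ∧
      (D : Set (EuclideanSpace ℂ (Fin m) × EuclideanSpace ℂ (Fin m)))
        ⊆ {p | (V p.1 - p.1) + Complex.I • (V p.2 + p.2) = 0} ∧
      (Module.finrank ℂ D = m →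
        (D : Set (EuclideanSpace ℂ (Fin m) × EuclideanSpace ℂ (Fin m)))
          = {p | (V p.1 - p.1) + Complex.I • (V p.2 + p.2) = 0}) := by
  classical
  set E := EuclideanSpace ℂ (Fin m) with hE
  have hdiss' : ∀ p ∈ D, 0 ≤ (inner ℂ p.2 p.1).im := by
    intro p hp
    have h := hdiss p hp
    have : (inner ℂ p.2 p.1) = ∑ k, p.1 k * (starRingEnd ℂ) (p.2 k) := by
      rw [PiLp.inner_apply]
      congr 1
    rwa [this]
  set L : E × E →ₗ[ℂ] E :=
    LinearMap.fst ℂ E E + Complex.I • LinearMap.snd ℂ E E with hLdef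
  set T : E × E →ₗ[ℂ] E :=
    LinearMap.fst ℂ E E - Complex.I • LinearMap.snd ℂ E E with hTdef
  have hLapp : ∀ p : E × E, L p = p.1 + Complex.I • p.2 := by intro p; simp [hLdef]
  have hTapp : ∀ p : E × E, T p = p.1 - Complex.I • p.2 := by intro p; simp [hTdef]
  have hkey : ∀ p ∈ D, ‖T p‖ ≤ ‖L p‖ := by
    intro p hp
    rw [hLapp, hTapp]
    exact key_norm' _ _ (hdiss' p hp)
  have hzero : ∀ p : E × E, L p = 0 → T p = 0 → p = 0 := by
    intro p h1 h2
    have ha : p.1 = (1/2 : ℂ) • (L p + T p) := by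
      rw [hLapp, hTapp]
      match_scalars <;> simp [Complex.ext_iff] <;> norm_num
    have hb : p.2 = (-(Complex.I)/2) • (L p - T p) := by
      rw [hLapp, hTapp]
      match_scalars <;> simp [Complex.ext_iff] <;> norm_num
    have h01 : p.1 = 0 := by rw [ha, h1, h2]; simp
    have h02 : p.2 = 0 := by rw [hb, h1, h2]; simp
    rw [Prod.ext_iff]
    exact ⟨h01, h02⟩
  -- the Cayley transform on M = range of L restricted to D
  set e : D →ₗ[ℂ] E := L ∘ₗ D.subtype with hedef
  have heapp : ∀ d : D, e d = L (d : E × E) := fun d => rfl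
  have he : Function.Injective e := by
    rw [← LinearMap.ker_eq_bot, LinearMap.ker_eq_bot']
    intro d hd
    have hLd : L (d : E × E) = 0 := hd
    have hTd : T (d : E × E) = 0 := by
      have h := hkey d d.2
      rw [hLd, norm_zero] at h
      exact norm_le_zero_iff.mp h
    exact Subtype.ext (hzero _ hLd hTd)
  set M := LinearMap.range e with hMdef
  set eqv : D ≃ₗ[ℂ] M := LinearEquiv.ofInjective e he with heqv
  set V0 : M →ₗ[ℂ] E := (T ∘ₗ D.subtype) ∘ₗ (eqv.symm : M →ₗ[ℂ] D) with hV0def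
  have hV0app : ∀ y : M, V0 y = T ((eqv.symm y : D) : E × E) := fun y => rfl
  have hV0norm : ∀ y : M, ‖V0 y‖ ≤ ‖(y : E)‖ := by
    intro y
    have hyd : (y : E) = e (eqv.symm y) := by
      conv_lhs => rw [← eqv.apply_symm_apply y]
      exact LinearEquiv.ofInjective_apply e (eqv.symm y)
    rw [hV0app, hyd, heapp]
    exact hkey _ (eqv.symm y).2
  set V : E →ₗ[ℂ] E := V0 ∘ₗ (M.orthogonalProjectionOnto : E →L[ℂ] M).toLinearMap with hVdef
  have hVapp : ∀ x : E, V x = V0 (M.orthogonalProjectionOnto x) := fun x => rfl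
  have hVnorm : ∀ x : E, ‖V x‖ ≤ ‖x‖ := by
    intro x
    have h1 : ‖V x‖ ≤ ‖((M.orthogonalProjectionOnto x : M) : E)‖ := by
      rw [hVapp]; exact hV0norm _
    have h2 : ‖((M.orthogonalProjectionOnto x : M) : E)‖ = ‖(M.orthogonalProjectionOnto x : M)‖ := rfl
    have h3 := M.orthogonalProjectionOnto.le_opNorm x
    have h4 := Submodule.orthogonalProjectionOnto_norm_le M
    have h5 : (0:ℝ) ≤ ‖x‖ := norm_nonneg x
    nlinarith
  have hVL : ∀ p ∈ D, V (L p) = T p := by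
    intro p hp
    have hmem : L p ∈ M := ⟨⟨p, hp⟩, rfl⟩
    have hproj : M.orthogonalProjectionOnto (L p) = ⟨L p, hmem⟩ :=
      Submodule.orthogonalProjectionOnto_mem_subspace_eq_self (⟨L p, hmem⟩ : M)
    have h2 : (⟨L p, hmem⟩ : M) = eqv ⟨p, hp⟩ :=
      Subtype.ext (LinearEquiv.ofInjective_apply e ⟨p, hp⟩).symm
    rw [hVapp, hproj, h2, hV0app, eqv.symm_apply_apply]
  set W : E × E →ₗ[ℂ] E :=
    (V - LinearMap.id) ∘ₗ LinearMap.fst ℂ E E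
      + Complex.I • ((V + LinearMap.id) ∘ₗ LinearMap.snd ℂ E E) with hWdef
  have hWapp : ∀ p : E × E, W p = (V p.1 - p.1) + Complex.I • (V p.2 + p.2) := by
    intro p; simp [hWdef]
  have hWLT : ∀ p : E × E, W p = V (L p) - T p := by
    intro p
    rw [hWapp, hLapp, hTapp, map_add, map_smul]
    module
  have hDk : D ≤ LinearMap.ker W := by
    intro p hp
    rw [LinearMap.mem_ker, hWLT, hVL p hp, sub_self]
  have hsetker : {p : E × E | (V p.1 - p.1) + Complex.I • (V p.2 + p.2) = 0}
      = ↑(LinearMap.ker W) := by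
    ext p
    simp only [Set.mem_setOf_eq, SetLike.mem_coe, LinearMap.mem_ker, hWapp]
  have hsub : (D : Set (E × E)) ⊆ {p | (V p.1 - p.1) + Complex.I • (V p.2 + p.2) = 0} := by
    rw [hsetker]; exact hDk
  refine ⟨V, hVnorm, hsub, ?_⟩
  intro hD
  have hbij : Function.Bijective (L ∘ₗ (LinearMap.ker W).subtype) := by
    constructor
    · rw [← LinearMap.ker_eq_bot, LinearMap.ker_eq_bot']
      intro d hd
      have hLd : L (d : E × E) = 0 := hd
      have hW0 : W (d : E × E) = 0 := d.2
      have hTd : T (d : E × E) = 0 := by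
        rw [hWLT, hLd, map_zero, zero_sub, neg_eq_zero] at hW0
        exact hW0
      exact Subtype.ext (hzero _ hLd hTd)
    · intro c
      set p : E × E := ((1/2 : ℂ) • (c + V c), (-(Complex.I)/2) • (c - V c)) with hpdef
      have hLp : L p = c := by
        rw [hLapp]
        show (1/2 : ℂ) • (c + V c) + Complex.I • ((-(Complex.I)/2) • (c - V c)) = c
        match_scalars <;> simp [Complex.ext_iff] <;> norm_num
      have hTp : T p = V c := by
        rw [hTapp]
        show (1/2 : ℂ) • (c + V c) - Complex.I • ((-(Complex.I)/2) • (c - V c)) = V c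
        match_scalars <;> simp [Complex.ext_iff] <;> norm_num
      have hpker : p ∈ LinearMap.ker W := by
        rw [LinearMap.mem_ker, hWLT, hLp, hTp, sub_self]
      exact ⟨⟨p, hpker⟩, hLp⟩
  have hfr : finrank ℂ (LinearMap.ker W) = m := by
    have h := (LinearEquiv.ofBijective _ hbij).finrank_eq
    rw [h]
    exact finrank_euclideanSpace_fin
  have hDW : D = LinearMap.ker W :=
    Submodule.eq_of_le_of_finrank_le hDk (by rw [hfr, hD])
  rw [hsetker, hDW]
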